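/- arXiv:2405.19172 — 4 statements merged into one kernel-verified Lean document; each statement's English description precedes it below -/
import Mathlib

section
/- For a simple graph G on n ≥ 2 vertices with cc(G) connected components, the generalized Sierpiński graph S(G,t) has exactly (n^t (cc(G) − 1) + n − cc(G)) / (n − 1) connected components. -/
variable {V : Type*}

/-- Adjacency of the generalized Sierpiński graph `S(G,t)` on words of length `t`:
`u` and `v` are adjacent iff there is an index `i` with `u j = v j` for `j < i`,
`u i` adjacent to `v i` in `G`, and `u j = v i`, `v j = u i` for `j > i`. -/
def sierAdj (G : SimpleGraph V) (t : ℕ) (u v : Fin t → V) : Prop :=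
  ∃ i : Fin t, (∀ j, j < i → u j = v j) ∧ G.Adj (u i) (v i) ∧
    ∀ j, i < j → u j = v i ∧ v j = u i

/-- The generalized Sierpiński graph `S(G,t)`. -/
def sier (G : SimpleGraph V) (t : ℕ) : SimpleGraph (Fin t → V) where
  Adj := sierAdj G t
  symm := ⟨by
    rintro u v ⟨i, h1, h2, h3⟩
    exact ⟨i, fun j hj => (h1 j hj).symm, h2.symm,
      fun j hj => ⟨(h3 j hj).2, (h3 j hj).1⟩⟩⟩
  loopless := ⟨by
    rintro u ⟨i, h1, h2, h3⟩
    exact G.irrefl h2⟩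

/-- `linkingAt G t p u v` : `uv` is a linking edge of `S(G,t)` appearing at
(0-indexed) position `p < t - 1`; in the paper's terminology this linking edge is
produced at step `t - p`, and its contraction is a vertex contracted at step `t - p`. -/
def linkingAt (G : SimpleGraph V) (t p : ℕ) (u v : Fin t → V) : Prop :=
  ∃ i : Fin t, i.val = p ∧ i.val + 1 < t ∧ (∀ j, j < i → u j = v j) ∧
    G.Adj (u i) (v i) ∧ ∀ j, i < j → u j = v i ∧ v j = u i

/-- `uv` is a linking edge of `S(G,t)` (an edge appearing at some step `≥ 2`). -/
def linking (G : SimpleGraph V) (t : ℕ) (u v : Fin t → V) : Prop :=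
  ∃ p, linkingAt G t p u v

/-- The equivalence relation on words generated by identifying the two endpoints
of each linking edge. -/
def gasketSetoid (G : SimpleGraph V) (t : ℕ) : Setoid (Fin t → V) :=
  Relation.EqvGen.setoid (linking G t)

/-- The generalized Sierpiński gasket graph `S[G,t]`, obtained from `S(G,t)` by
contracting all linking edges. -/
def gasket (G : SimpleGraph V) (t : ℕ) :
    SimpleGraph (Quotient (gasketSetoid G t)) where
  Adj x y := x ≠ y ∧ ∃ u v, Quotient.mk (gasketSetoid G t) u = x ∧
    Quotient.mk (gasketSetoid G t) v = y ∧ sierAdj G t u v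
  symm := ⟨by
    rintro x y ⟨hxy, u, v, hu, hv, h⟩
    exact ⟨hxy.symm, v, u, hv, hu, (sier G t).adj_symm h⟩⟩
  loopless := ⟨fun _ h => h.1 rfl⟩

/-- The expanded word `i j j ... j`; for `ij ∈ E(G)` its class in `S[G,t]` is the
contracted vertex `{i,j}_t`. -/
def topWord (t : ℕ) (i j : V) : Fin t → V := fun k => if k.val = 0 then i else j

namespace SierAux

attribute [local instance] Classical.propDecidable

variable (G : SimpleGraph V) (m : ℕ)

/-- component of the last letter -/
def cmp (u : Fin (m + 1) → V) : G.ConnectedComponent :=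
  G.connectedComponentMk (u (Fin.last m))

def PP (u : Fin (m + 1) → V) (k : ℕ) : Prop :=
  ∀ j : Fin (m + 1), k ≤ j.val → G.connectedComponentMk (u j) = cmp G m u

lemma PP_top (u : Fin (m + 1) → V) : PP G m u m := by
  intro j hj
  have : j = Fin.last m := Fin.ext (le_antisymm (Nat.lt_succ_iff.mp j.isLt) hj)
  rw [this]; rfl

lemma PP_ex (u : Fin (m + 1) → V) : ∃ k, PP G m u k := ⟨m, PP_top G m u⟩

noncomputable def Kd (u : Fin (m + 1) → V) : ℕ := Nat.find (PP_ex G m u)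

lemma Kd_spec (u : Fin (m + 1) → V) : PP G m u (Kd G m u) := Nat.find_spec _

lemma Kd_le (u : Fin (m + 1) → V) : Kd G m u ≤ m := Nat.find_le (PP_top G m u)

lemma PP_mono (u : Fin (m + 1) → V) {a b : ℕ} (h : a ≤ b) (H : PP G m u a) :
    PP G m u b := fun j hj => H j (h.trans hj)

lemma Kd_min (u : Fin (m + 1) → V) {k : ℕ} (h : k < Kd G m u) : ¬ PP G m u k :=
  Nat.find_min _ h

lemma Kd_pos_ne (u : Fin (m + 1) → V) (j : Fin (m + 1)) (hj : j.val = Kd G m u - 1)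
    (h : 0 < Kd G m u) : G.connectedComponentMk (u j) ≠ cmp G m u := by
  intro heq
  refine Kd_min G m u (k := Kd G m u - 1) (by omega) ?_
  intro j' hj'
  rcases Nat.lt_or_ge j'.val (Kd G m u) with h' | h'
  · have : j' = j := Fin.ext (by omega)
    rw [this, heq]
  · exact Kd_spec G m u j' h'

abbrev D := Σ x : V, {C : G.ConnectedComponent // C ≠ G.connectedComponentMk x}

abbrev T := G.ConnectedComponent ⊕ Σ k : Fin m, (Fin k.val → V) × D G

def mkT (k : ℕ) (hk : k < m) (f : ℕ → V) (x : V) (C : G.ConnectedComponent)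
    (hC : C ≠ G.connectedComponentMk x) : T G m :=
  Sum.inr ⟨⟨k, hk⟩, fun j => f j.val, ⟨x, C, hC⟩⟩

lemma mkT_congr {k k' : ℕ} {hk : k < m} {hk' : k' < m} {f f' : ℕ → V} {x x' : V}
    {C C' : G.ConnectedComponent} {hC : C ≠ G.connectedComponentMk x}
    {hC' : C' ≠ G.connectedComponentMk x'}
    (h1 : k = k') (h2 : ∀ j, j < k → f j = f' j) (h3 : x = x') (h4 : C = C') :
    mkT G m k hk f x C hC = mkT G m k' hk' f' x' C' hC' := by
  subst h1; subst h3; subst h4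
  unfold mkT
  have : (fun j : Fin k => f j.val) = fun j : Fin k => f' j.val :=
    funext fun j => h2 j.val j.isLt
  rw [this]

noncomputable def Phi (u : Fin (m + 1) → V) : T G m :=
  if h : Kd G m u = 0 then Sum.inl (cmp G m u)
  else mkT G m (Kd G m u - 1) (by have := Kd_le G m u; omega)
    (fun j => u ⟨j % (m + 1), Nat.mod_lt _ (Nat.succ_pos m)⟩)
    (u ⟨Kd G m u - 1, by have := Kd_le G m u; omega⟩) (cmp G m u)
    (Ne.symm (Kd_pos_ne G m u _ rfl (by omega)))

def KofT : T G m → ℕ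
  | Sum.inl _ => 0
  | Sum.inr ⟨k, _⟩ => k.val + 1

def CofT : T G m → G.ConnectedComponent
  | Sum.inl C => C
  | Sum.inr ⟨_, _, ⟨_, C, _⟩⟩ => C

def FofT : T G m → ℕ → Option V
  | Sum.inl _ => fun _ => none
  | Sum.inr ⟨k, f, ⟨x, _, _⟩⟩ => fun j =>
      if h : j < k.val then some (f ⟨j, h⟩) else if j = k.val then some x else none

lemma KofT_Phi (u : Fin (m + 1) → V) : KofT G m (Phi G m u) = Kd G m u := by
  unfold Phi
  split_ifs with h
  · simp [KofT, h]
  · simp only [mkT, KofT]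
    omega

lemma CofT_Phi (u : Fin (m + 1) → V) : CofT G m (Phi G m u) = cmp G m u := by
  unfold Phi
  split_ifs with h <;> simp [CofT, mkT]

lemma FofT_Phi (u : Fin (m + 1) → V) (j : Fin (m + 1)) (hj : j.val < Kd G m u) :
    FofT G m (Phi G m u) j.val = some (u j) := by
  unfold Phi
  have h0 : Kd G m u ≠ 0 := by omega
  rw [dif_neg h0]
  simp only [mkT, FofT]
  by_cases h1 : j.val < Kd G m u - 1
  · rw [dif_pos h1]
    have : (⟨j.val % (m + 1), Nat.mod_lt _ (Nat.succ_pos m)⟩ : Fin (m + 1)) = j :=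
      Fin.ext (by simpa using Nat.mod_eq_of_lt j.isLt)
    rw [this]
  · have hje : j.val = Kd G m u - 1 := by omega
    rw [dif_neg h1, if_pos hje]
    have : (⟨Kd G m u - 1, by have := Kd_le G m u; omega⟩ : Fin (m + 1)) = j :=
      Fin.ext hje.symm
    rw [this]

lemma comp_eq_of_adj {t : ℕ} {u v : Fin t → V} (h : sierAdj G t u v) (j : Fin t) :
    G.connectedComponentMk (u j) = G.connectedComponentMk (v j) := by
  obtain ⟨i, h1, h2, h3⟩ := h
  rcases lt_trichotomy j i with hj | hj | hj
  · rw [h1 j hj]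
  · subst hj; exact SimpleGraph.ConnectedComponent.sound h2.reachable
  · rw [(h3 j hj).1, (h3 j hj).2]
    exact (SimpleGraph.ConnectedComponent.sound h2.reachable).symm

lemma cmp_eq_of_adj {u v : Fin (m + 1) → V} (h : sierAdj G (m + 1) u v) :
    cmp G m u = cmp G m v :=
  comp_eq_of_adj G h (Fin.last m)

lemma PP_iff_of_adj {u v : Fin (m + 1) → V} (h : sierAdj G (m + 1) u v) (k : ℕ) :
    PP G m u k ↔ PP G m v k := by
  unfold PP
  rw [cmp_eq_of_adj G m h]
  exact forall_congr' fun j => by rw [comp_eq_of_adj G h j]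

lemma Kd_eq_of_adj {u v : Fin (m + 1) → V} (h : sierAdj G (m + 1) u v) :
    Kd G m u = Kd G m v :=
  le_antisymm (Nat.find_le ((PP_iff_of_adj G m h _).mpr (Kd_spec G m v)))
    (Nat.find_le ((PP_iff_of_adj G m h _).mp (Kd_spec G m u)))

lemma Kd_le_idx {u v : Fin (m + 1) → V} (i : Fin (m + 1))
    (h2 : G.Adj (u i) (v i)) (h3 : ∀ j, i < j → u j = v i ∧ v j = u i) :
    Kd G m u ≤ i.val := by
  have key : ∀ j : Fin (m + 1), i ≤ j →
      G.connectedComponentMk (u j) = G.connectedComponentMk (u i) := by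
    intro j hj
    rcases eq_or_lt_of_le hj with heq | hlt
    · rw [← heq]
    · rw [(h3 j hlt).1]
      exact (SimpleGraph.ConnectedComponent.sound h2.reachable).symm
  refine Nat.find_le ?_
  intro j hj
  have hij : i ≤ j := hj
  have hlast : i ≤ Fin.last m := Fin.le_last i
  rw [key j hij]
  exact (key (Fin.last m) hlast).symm

lemma Phi_adj {u v : Fin (m + 1) → V} (h : sierAdj G (m + 1) u v) :
    Phi G m u = Phi G m v := by
  obtain ⟨i, h1, h2, h3⟩ := h
  have hK : Kd G m u = Kd G m v := Kd_eq_of_adj G m ⟨i, h1, h2, h3⟩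
  have hcmp : cmp G m u = cmp G m v := cmp_eq_of_adj G m ⟨i, h1, h2, h3⟩
  have hKi : Kd G m u ≤ i.val := Kd_le_idx G m i h2 h3
  unfold Phi
  by_cases h0 : Kd G m u = 0
  · rw [dif_pos h0, dif_pos (by omega), hcmp]
  · rw [dif_neg h0, dif_neg (by omega)]
    refine mkT_congr G m (by omega) ?_ ?_ hcmp
    · intro j hj
      have hjm : j % (m + 1) = j := Nat.mod_eq_of_lt (by have := Kd_le G m u; omega)
      have hjlt : (⟨j % (m + 1), Nat.mod_lt _ (Nat.succ_pos m)⟩ : Fin (m + 1)) < i := by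
        simp only [Fin.lt_def, hjm]; omega
      exact h1 _ hjlt
    · have hne : (⟨Kd G m u - 1, by have := Kd_le G m u; omega⟩ : Fin (m + 1)) < i := by
        simp only [Fin.lt_def]; omega
      rw [h1 _ hne]
      congr 1
      exact Fin.ext (by simp [hK])

lemma reach_of (C : G.ConnectedComponent) : ∀ (d k : ℕ), m + 1 - k ≤ d →
    ∀ u v : Fin (m + 1) → V,
    (∀ j : Fin (m + 1), j.val < k → u j = v j) →
    (∀ j : Fin (m + 1), k ≤ j.val → G.connectedComponentMk (u j) = C) →
    (∀ j : Fin (m + 1), k ≤ j.val → G.connectedComponentMk (v j) = C) →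
    (sier G (m + 1)).Reachable u v := by
  intro d
  induction d with
  | zero =>
    intro k hk u v hpre _ _
    have : u = v := funext fun j => hpre j (by omega)
    rw [this]
  | succ d ih =>
    intro k hk u v hpre hu hv
    by_cases hkm : m + 1 ≤ k
    · have : u = v := funext fun j => hpre j (by omega)
      rw [this]
    push_neg at hkm
    set i : Fin (m + 1) := ⟨k, hkm⟩ with hi
    have hival : i.val = k := rfl
    -- the "tail-constant" modification
    let w : (Fin (m + 1) → V) → V → (Fin (m + 1) → V) :=
      fun p a j => if k ≤ j.val then a else p j
    have hwcomp : ∀ (p : Fin (m + 1) → V) (a : V), G.connectedComponentMk a = C →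
        ∀ j : Fin (m + 1), k ≤ j.val → G.connectedComponentMk (w p a j) = C := by
      intro p a ha j hj
      simp only [w, if_pos hj]; exact ha
    have step1 : ∀ p : Fin (m + 1) → V,
        (∀ j : Fin (m + 1), k ≤ j.val → G.connectedComponentMk (p j) = C) →
        (sier G (m + 1)).Reachable p (w p (p i)) := by
      intro p hp
      refine ih (k + 1) (by omega) p (w p (p i)) ?_ (fun j hj => hp j (by omega)) ?_
      · intro j hj
        by_cases hjk : k ≤ j.val
        · have : j = i := Fin.ext (by omega)
          simp [w, this, hjk]
        · simp [w, hjk]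
      · intro j hj
        exact hwcomp p (p i) (hp i (le_of_eq hival.symm)) j (by omega)
    -- moving the constant tail along an edge of G
    have key1 : ∀ p : Fin (m + 1) → V, ∀ a b : V, G.connectedComponentMk a = C →
        G.Adj a b → (sier G (m + 1)).Reachable (w p a) (w p b) := by
      intro p a b ha hab
      have hb : G.connectedComponentMk b = C := by
        rw [← ha]; exact (SimpleGraph.ConnectedComponent.sound hab.reachable).symm
      -- mid1 : position k = a, positions > k = b
      set mid1 : Fin (m + 1) → V := fun j => if k < j.val then b else w p a j with hm1
      -- mid2 : position k = b, positions > k = a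
      set mid2 : Fin (m + 1) → V := fun j => if k < j.val then a else w p b j with hm2
      have r1 : (sier G (m + 1)).Reachable (w p a) mid1 := by
        refine ih (k + 1) (by omega) _ _ ?_ ?_ ?_
        · intro j hj
          simp only [mid1]
          rw [if_neg (by omega)]
        · exact fun j hj => hwcomp p a ha j (by omega)
        · intro j hj
          simp only [mid1]
          rw [if_pos (by omega)]
          exact hb
      have r2 : (sier G (m + 1)).Reachable mid2 (w p b) := by
        refine ih (k + 1) (by omega) _ _ ?_ ?_ ?_
        · intro j hj
          simp only [mid2]
          rw [if_neg (by omega)]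
        · intro j hj
          simp only [mid2]
          rw [if_pos (by omega)]
          exact ha
        · exact fun j hj => hwcomp p b hb j (by omega)
      have radj : (sier G (m + 1)).Adj mid1 mid2 := by
        refine ⟨i, ?_, ?_, ?_⟩
        · intro j hj
          have hjk : j.val < k := hj
          simp only [mid1, mid2, w]
          rw [if_neg (by omega), if_neg (by omega), if_neg (by omega), if_neg (by omega)]
        · have e1 : mid1 i = a := by
            simp only [mid1, w]
            rw [if_neg (by omega), if_pos le_rfl]
          have e2 : mid2 i = b := by
            simp only [mid2, w]
            rw [if_neg (by omega), if_pos le_rfl]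
          rw [e1, e2]; exact hab
        · intro j hj
          have hjk : k < j.val := hj
          have e1 : mid1 j = b := by simp only [mid1]; rw [if_pos hjk]
          have e2 : mid2 j = a := by simp only [mid2]; rw [if_pos hjk]
          have e3 : mid1 i = a := by
            simp only [mid1, w]
            rw [if_neg (by omega), if_pos le_rfl]
          have e4 : mid2 i = b := by
            simp only [mid2, w]
            rw [if_neg (by omega), if_pos le_rfl]
          rw [e1, e2, e3, e4]; exact ⟨rfl, rfl⟩
      exact (r1.trans radj.reachable).trans r2
    have key : ∀ p : Fin (m + 1) → V, ∀ a b : V, G.connectedComponentMk a = C →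
        G.Reachable a b → (sier G (m + 1)).Reachable (w p a) (w p b) := by
      intro p a b ha hr
      obtain ⟨q⟩ := hr
      clear hpre hu hv
      induction q with
      | nil => exact SimpleGraph.Reachable.refl _
      | @cons x y z hadj q ihq =>
        have hy : G.connectedComponentMk y = C := by
          rw [← ha]; exact (SimpleGraph.ConnectedComponent.sound hadj.reachable).symm
        exact (key1 p x y ha hadj).trans (ihq hy)
    -- assemble
    have hcu : G.connectedComponentMk (u i) = C := hu i le_rfl
    have hcv : G.connectedComponentMk (v i) = C := hv i le_rfl
    have huv : G.Reachable (u i) (v i) :=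
      SimpleGraph.ConnectedComponent.exact (hcu.trans hcv.symm)
    have heq : w u (v i) = w v (v i) := by
      funext j
      by_cases hj : k ≤ j.val
      · simp [w, hj]
      · simp only [w, if_neg hj]
        exact hpre j (by omega)
    have r1 : (sier G (m + 1)).Reachable u (w u (u i)) := step1 u hu
    have r2 : (sier G (m + 1)).Reachable (w u (u i)) (w u (v i)) :=
      key u (u i) (v i) hcu huv
    have r3 : (sier G (m + 1)).Reachable (w v (v i)) v := (step1 v hv).symm
    rw [heq] at r2
    exact (r1.trans r2).trans r3

lemma Phi_reach {u v : Fin (m + 1) → V} (h : (sier G (m + 1)).Reachable u v) :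
    Phi G m u = Phi G m v := by
  obtain ⟨q⟩ := h
  induction q with
  | nil => rfl
  | cons hadj q ihq => exact (Phi_adj G m hadj).trans ihq

lemma reach_of_Phi {u v : Fin (m + 1) → V} (h : Phi G m u = Phi G m v) :
    (sier G (m + 1)).Reachable u v := by
  have hK : Kd G m u = Kd G m v := by
    rw [← KofT_Phi G m u, ← KofT_Phi G m v, h]
  have hC : cmp G m u = cmp G m v := by
    rw [← CofT_Phi G m u, ← CofT_Phi G m v, h]
  have hpre : ∀ j : Fin (m + 1), j.val < Kd G m u → u j = v j := by
    intro j hj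
    have := (FofT_Phi G m u j hj).symm.trans
      ((congrFun (congrArg (FofT G m) h) j.val).trans (FofT_Phi G m v j (hK ▸ hj)))
    exact Option.some.inj this
  refine reach_of G m (cmp G m u) (m + 1) (Kd G m u) (by omega) u v hpre
    (Kd_spec G m u) ?_
  intro j hj
  rw [hC]
  exact Kd_spec G m v j (hK ▸ hj)

lemma Phi_surj : Function.Surjective (Phi G m) := by
  rintro (C | ⟨k, f, ⟨x, C, hC⟩⟩)
  · obtain ⟨a, ha⟩ := C.exists_rep
    refine ⟨fun _ => a, ?_⟩
    have h0 : Kd G m (fun _ => a) = 0 := by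
      rw [Kd, Nat.find_eq_zero]
      intro j _; rfl
    unfold Phi
    rw [dif_pos h0]
    have : cmp G m (fun _ => a) = C := ha
    rw [this]
  · obtain ⟨b, hb⟩ := C.exists_rep
    set u : Fin (m + 1) → V := fun j =>
      if h : j.val < k.val then f ⟨j.val, h⟩ else if j.val = k.val then x else b with hu
    have hulast : u (Fin.last m) = b := by
      have hkm : k.val < m := k.isLt
      simp only [u, Fin.val_last]
      rw [dif_neg (by omega), if_neg (by omega)]
    have hcmp : cmp G m u = C := by rw [cmp, hulast]; exact hb
    have hKd : Kd G m u = k.val + 1 := by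
      rw [Kd, Nat.find_eq_iff]
      constructor
      · intro j hj
        have : u j = b := by
          simp only [u]
          rw [dif_neg (by omega), if_neg (by omega)]
        rw [this, hcmp]; exact hb
      · intro l hl hPl
        have hkm : k.val < m := k.isLt
        have := hPl ⟨k.val, by omega⟩ (by simpa using by omega)
        have hux : u ⟨k.val, by omega⟩ = x := by
          simp only [u]
          rw [dif_neg (by omega)]
          simp
        rw [hux, hcmp] at this
        exact hC this.symm
    refine ⟨u, ?_⟩
    have h0 : Kd G m u ≠ 0 := by omega
    unfold Phi
    rw [dif_neg h0]
    have target_eq : (Sum.inr ⟨k, f, ⟨x, C, hC⟩⟩ : T G m) =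
        mkT G m k.val k.isLt (fun j => if h : j < k.val then f ⟨j, h⟩ else x) x C hC := by
      unfold mkT
      congr 1
      refine Sigma.ext rfl ?_
      simp only [heq_eq_eq]
      congr 1
      funext j
      rw [dif_pos j.isLt]
    rw [target_eq]
    refine mkT_congr G m (by omega) ?_ ?_ hcmp
    · intro j hj
      have hjm : j % (m + 1) = j := Nat.mod_eq_of_lt (by have := k.isLt; omega)
      have hjk : j < k.val := by omega
      simp only [u]
      rw [dif_pos (by simpa [hjm] using hjk)]
      simp only [hjm]
      rw [dif_pos hjk]
    · have hidx : (⟨Kd G m u - 1, by have := Kd_le G m u; omega⟩ : Fin (m + 1)) =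
          ⟨k.val, by have := k.isLt; omega⟩ :=
        Fin.ext (show Kd G m u - 1 = k.val by omega)
      rw [hidx]
      simp only [u]
      rw [dif_neg (by omega)]
      simp

noncomputable def PhiBar : (sier G (m + 1)).ConnectedComponent → T G m :=
  SimpleGraph.ConnectedComponent.lift (Phi G m) (fun u v p _ => Phi_reach G m ⟨p⟩)

lemma PhiBar_bij : Function.Bijective (PhiBar G m) := by
  constructor
  · intro c d
    refine SimpleGraph.ConnectedComponent.ind₂ ?_ c d
    intro u v h
    exact SimpleGraph.ConnectedComponent.sound (reach_of_Phi G m h)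
  · intro y
    obtain ⟨u, hu⟩ := Phi_surj G m y
    exact ⟨(sier G (m + 1)).connectedComponentMk u, hu⟩

lemma card_T [Fintype V] :
    Nat.card (T G m) = Nat.card G.ConnectedComponent +
      (∑ k ∈ Finset.range m, Fintype.card V ^ (k + 1)) *
        (Nat.card G.ConnectedComponent - 1) := by
  letI : Fintype G.ConnectedComponent := Fintype.ofFinite _
  have hD : Fintype.card (D G) = Fintype.card V * (Fintype.card G.ConnectedComponent - 1) := by
    rw [Fintype.card_sigma]
    have : ∀ x : V, Fintype.card {C : G.ConnectedComponent // C ≠ G.connectedComponentMk x}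
        = Fintype.card G.ConnectedComponent - 1 := by
      intro x
      have h1 := Fintype.card_subtype_compl
        (fun C : G.ConnectedComponent => C = G.connectedComponentMk x)
      rw [Fintype.card_subtype_eq] at h1
      convert h1 using 2
    simp [this, Finset.sum_const, mul_comm]
  rw [Nat.card_eq_fintype_card, Fintype.card_sum, Fintype.card_sigma,
    Nat.card_eq_fintype_card]
  congr 1
  have : ∀ k : Fin m, Fintype.card ((Fin k.val → V) × D G)
      = Fintype.card V ^ (k.val + 1) * (Fintype.card G.ConnectedComponent - 1) := by
    intro k
    rw [Fintype.card_prod, Fintype.card_fun, Fintype.card_fin, hD, pow_succ]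
    ring
  simp only [this]
  rw [Fin.sum_univ_eq_sum_range (fun k => Fintype.card V ^ (k + 1) *
    (Fintype.card G.ConnectedComponent - 1)), Finset.sum_mul]

end SierAux

/-- `S(G,t)` has `(n^t(cc(G)−1) + n − cc(G))/(n−1)` connected components. -/
theorem stmt_1 [Fintype V] (G : SimpleGraph V) (n c t : ℕ)
    (hn : n = Fintype.card V) (h2 : 2 ≤ n) (ht : 1 ≤ t)
    (hc : c = Nat.card G.ConnectedComponent) :
    Nat.card (sier G t).ConnectedComponent = (n ^ t * (c - 1) + n - c) / (n - 1) := by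
  obtain ⟨m, rfl⟩ : ∃ m, t = m + 1 := ⟨t - 1, by omega⟩
  have hcard : Nat.card (sier G (m + 1)).ConnectedComponent = Nat.card (SierAux.T G m) :=
    Nat.card_congr (Equiv.ofBijective _ (SierAux.PhiBar_bij G m))
  rw [hcard, SierAux.card_T, ← hc, ← hn]
  have hV : Nonempty V := by
    rw [hn] at h2; exact Fintype.card_pos_iff.mp (by omega)
  haveI : Nonempty G.ConnectedComponent := ⟨G.connectedComponentMk hV.some⟩
  have hc1 : 1 ≤ c := by rw [hc]; exact Nat.card_pos
  have hcn : c ≤ n := by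
    rw [hc, hn, ← Nat.card_eq_fintype_card]
    exact Nat.card_le_card_of_surjective _ (Quot.mk_surjective)
  set S := ∑ k ∈ Finset.range m, n ^ (k + 1) with hS
  have hgeomZ : ((n : ℤ) - 1) * (∑ k ∈ Finset.range m, (n : ℤ) ^ (k + 1))
      = (n : ℤ) ^ (m + 1) - n := by
    have h := geom_sum_mul (n : ℤ) m
    have hsm : (∑ k ∈ Finset.range m, (n : ℤ) ^ (k + 1))
        = (∑ i ∈ Finset.range m, (n : ℤ) ^ i) * n := by
      rw [Finset.sum_mul]
      exact Finset.sum_congr rfl fun i _ => (pow_succ _ _)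
    rw [hsm]
    linear_combination (n : ℤ) * h
  have hmul : n ^ (m + 1) * (c - 1) + n - c = (c + S * (c - 1)) * (n - 1) := by
    have hle : c ≤ n ^ (m + 1) * (c - 1) + n := le_trans hcn (Nat.le_add_left _ _)
    zify [hc1, hcn, hle, show 1 ≤ n by omega]
    push_cast [hS]
    linear_combination (1 - (c : ℤ)) * hgeomZ
  exact (Nat.div_eq_of_eq_mul_left (by omega) hmul).symm
end

section
/- If G is acyclic, then S[G,t] is acyclic for every t ≥ 1. -/
variable {V : Type*}

open SimpleGraph

private lemma headTailExt {t : ℕ} {w w' : Fin (t + 1) → V} (h0 : w 0 = w' 0)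
    (hs : ∀ k : Fin t, w k.succ = w' k.succ) : w = w' :=
  funext fun j => Fin.cases h0 hs j

private lemma sierAdj_succ_iff (G : SimpleGraph V) (t : ℕ) (w w' : Fin (t + 1) → V) :
    sierAdj G (t + 1) w w' ↔
      (G.Adj (w 0) (w' 0) ∧ (∀ k : Fin t, w k.succ = w' 0) ∧ (∀ k : Fin t, w' k.succ = w 0)) ∨
      (w 0 = w' 0 ∧ sierAdj G t (w ∘ Fin.succ) (w' ∘ Fin.succ)) := by
  constructor
  · rintro ⟨i, h1, h2, h3⟩
    rcases Fin.eq_zero_or_eq_succ i with rfl | ⟨k, rfl⟩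
    · exact Or.inl ⟨h2, fun k => (h3 k.succ (Fin.succ_pos k)).1,
        fun k => (h3 k.succ (Fin.succ_pos k)).2⟩
    · exact Or.inr ⟨h1 0 (Fin.succ_pos k),
        ⟨k, fun j hj => h1 j.succ (by rwa [Fin.succ_lt_succ_iff]), h2,
          fun j hj => h3 j.succ (by rwa [Fin.succ_lt_succ_iff])⟩⟩
  · rintro (⟨h1, h2, h3⟩ | ⟨h0, k, h1, h2, h3⟩)
    · refine ⟨0, fun j hj => absurd hj (by simp), h1, fun j hj => ?_⟩
      rcases Fin.eq_zero_or_eq_succ j with rfl | ⟨m, rfl⟩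
      · exact absurd hj (lt_irrefl _)
      · exact ⟨h2 m, h3 m⟩
    · refine ⟨k.succ, fun j hj => ?_, h2, fun j hj => ?_⟩
      · rcases Fin.eq_zero_or_eq_succ j with rfl | ⟨m, rfl⟩
        · exact h0
        · exact h1 m (Fin.succ_lt_succ_iff.mp hj)
      · rcases Fin.eq_zero_or_eq_succ j with rfl | ⟨m, rfl⟩
        · exact absurd hj (by simp)
        · exact h3 m (Fin.succ_lt_succ_iff.mp hj)

private lemma reach_inv {W : Type*} {K : SimpleGraph W} (P : W → Prop)
    (hP : ∀ a b, K.Adj a b → (P a ↔ P b)) {a b : W} (h : K.Reachable a b) :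
    P a ↔ P b := by
  rw [SimpleGraph.reachable_iff_reflTransGen] at h
  induction h with
  | refl => exact Iff.rfl
  | tail _ h2 ih => exact ih.trans (hP _ _ h2)

private lemma sdiff_adj_of {W : Type*} (K : SimpleGraph W) {u v w w' : W} (h : K.Adj w w')
    (hne : s(w, w') ≠ s(u, v)) :
    (K \ SimpleGraph.fromEdgeSet {s(u, v)}).Adj w w' := by
  rw [SimpleGraph.sdiff_adj, SimpleGraph.fromEdgeSet_adj]
  exact ⟨h, fun hc => hne (Set.mem_singleton_iff.mp hc.1)⟩

private lemma of_sdiff_adj {W : Type*} {K : SimpleGraph W} {u v w w' : W}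
    (h : (K \ SimpleGraph.fromEdgeSet {s(u, v)}).Adj w w') :
    K.Adj w w' ∧ s(w, w') ≠ s(u, v) := by
  rw [SimpleGraph.sdiff_adj, SimpleGraph.fromEdgeSet_adj] at h
  exact ⟨h.1, fun hc => h.2 ⟨Set.mem_singleton_iff.mpr hc, h.1.ne⟩⟩

private lemma sier_bridge (G : SimpleGraph V) (hG : G.IsAcyclic) :
    ∀ t (u v : Fin t → V), sierAdj G t u v →
      ¬ ((sier G t) \ SimpleGraph.fromEdgeSet {s(u, v)}).Reachable u v := by
  have hGB : ∀ {a b : V}, G.Adj a b →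
      ¬ (G \ SimpleGraph.fromEdgeSet {s(a, b)}).Reachable a b := by
    intro a b hab
    have h := SimpleGraph.isAcyclic_iff_forall_adj_isBridge.mp hG hab
    rw [SimpleGraph.isBridge_iff] at h
    exact h
  intro t
  induction t with
  | zero =>
    rintro u v ⟨i, -⟩
    exact i.elim0
  | succ t ih =>
    intro u v huv hreach
    rcases (sierAdj_succ_iff G t u v).mp huv with ⟨hcd, hu2, hv2⟩ | ⟨hc0, hH⟩
    · -- cross edge case
      have key : ∀ a b : Fin (t + 1) → V,
          ((sier G (t + 1)) \ SimpleGraph.fromEdgeSet {s(u, v)}).Adj a b →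
          ((G \ SimpleGraph.fromEdgeSet {s(u 0, v 0)}).Reachable (u 0) (a 0) ↔
           (G \ SimpleGraph.fromEdgeSet {s(u 0, v 0)}).Reachable (u 0) (b 0)) := by
        intro a b hab
        obtain ⟨hT, hne⟩ := of_sdiff_adj hab
        rcases (sierAdj_succ_iff G t a b).mp hT with ⟨h1, h2, h3⟩ | ⟨h0, -⟩
        · have hne2 : s(a 0, b 0) ≠ s(u 0, v 0) := by
            intro hcc
            rcases Sym2.eq_iff.mp hcc with ⟨e1, e2⟩ | ⟨e1, e2⟩
            · refine hne ?_
              have ha : a = u := headTailExt e1 fun k => by rw [h2 k, e2, hu2 k]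
              have hb : b = v := headTailExt e2 fun k => by rw [h3 k, e1, hv2 k]
              rw [ha, hb]
            · refine hne ?_
              have ha : a = v := headTailExt e1 fun k => by rw [h2 k, e2, hv2 k]
              have hb : b = u := headTailExt e2 fun k => by rw [h3 k, e1, hu2 k]
              rw [ha, hb]
              exact Sym2.eq_swap
          have hadj' := sdiff_adj_of G h1 hne2
          exact ⟨fun hh => hh.trans hadj'.reachable, fun hh => hh.trans hadj'.symm.reachable⟩
        · rw [h0]
      have hiff := reach_inv
        (fun a => (G \ SimpleGraph.fromEdgeSet {s(u 0, v 0)}).Reachable (u 0) (a 0)) key hreach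
      exact hGB hcd (hiff.mp (SimpleGraph.Reachable.refl _))
    · -- copy edge case
      let σ : (Fin t → V) → Prop := fun ω =>
        ((sier G t) \ SimpleGraph.fromEdgeSet
          {s(u ∘ Fin.succ, v ∘ Fin.succ)}).Reachable (u ∘ Fin.succ) ω
      let τ : V → Prop := fun x => ∃ d₀, G.Adj (u 0) d₀ ∧ σ (fun _ => d₀) ∧
        Relation.ReflTransGen (fun a b => G.Adj a b ∧ a ≠ u 0 ∧ b ≠ u 0) d₀ x
      let P : (Fin (t + 1) → V) → Prop := fun w =>
        (w 0 = u 0 → σ (w ∘ Fin.succ)) ∧ (w 0 ≠ u 0 → τ (w 0))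
      have hσinv : ∀ ω ω', sierAdj G t ω ω' →
          s(ω, ω') ≠ s(u ∘ Fin.succ, v ∘ Fin.succ) → (σ ω ↔ σ ω') := by
        intro ω ω' h hne
        have hadj' := sdiff_adj_of (sier G t) h hne
        exact ⟨fun hh => hh.trans hadj'.reachable, fun hh => hh.trans hadj'.symm.reachable⟩
      have keyστ : ∀ x, G.Adj (u 0) x → (σ (fun _ => x) ↔ τ x) := by
        intro x hx
        constructor
        · intro hσx
          exact ⟨x, hx, hσx, Relation.ReflTransGen.refl⟩
        · rintro ⟨d₀, hadj₀, hσ₀, hr₀⟩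
          by_cases hdx : d₀ = x
          · rwa [hdx] at hσ₀
          · exfalso
            apply hGB hx
            have hstep1 : (G \ SimpleGraph.fromEdgeSet {s(u 0, x)}).Adj (u 0) d₀ := by
              refine sdiff_adj_of G hadj₀ ?_
              intro hcc
              rcases Sym2.eq_iff.mp hcc with ⟨e1, e2⟩ | ⟨e1, e2⟩
              · exact hdx e2
              · exact hx.ne e1
            have hlift : ∀ {a b : V},
                Relation.ReflTransGen (fun a b => G.Adj a b ∧ a ≠ u 0 ∧ b ≠ u 0) a b →
                (G \ SimpleGraph.fromEdgeSet {s(u 0, x)}).Reachable a b := by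
              intro a b hr
              induction hr with
              | refl => exact SimpleGraph.Reachable.refl _
              | tail _ h2 ih =>
                refine ih.trans (SimpleGraph.Adj.reachable (sdiff_adj_of G h2.1 ?_))
                intro hcc
                rcases Sym2.eq_iff.mp hcc with ⟨e1, e2⟩ | ⟨e1, e2⟩
                · exact h2.2.1 e1
                · exact h2.2.2 e2
            exact hstep1.reachable.trans (hlift hr₀)
      have τinv : ∀ a b, G.Adj a b → a ≠ u 0 → b ≠ u 0 → (τ a ↔ τ b) := by
        intro a b hab ha hb
        constructor
        · rintro ⟨d₀, h1, h2, hr⟩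
          exact ⟨d₀, h1, h2, hr.tail ⟨hab, ha, hb⟩⟩
        · rintro ⟨d₀, h1, h2, hr⟩
          exact ⟨d₀, h1, h2, hr.tail ⟨hab.symm, hb, ha⟩⟩
      have Pc : ∀ w : Fin (t + 1) → V, w 0 = u 0 → (P w ↔ σ (w ∘ Fin.succ)) := by
        intro w h
        exact ⟨fun hp => hp.1 h, fun hσ => ⟨fun _ => hσ, fun hn => absurd h hn⟩⟩
      have Pn : ∀ w : Fin (t + 1) → V, w 0 ≠ u 0 → (P w ↔ τ (w 0)) := by
        intro w h
        exact ⟨fun hp => hp.2 h, fun hτ => ⟨fun he => absurd he h, fun _ => hτ⟩⟩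
      have inv : ∀ a b : Fin (t + 1) → V,
          ((sier G (t + 1)) \ SimpleGraph.fromEdgeSet {s(u, v)}).Adj a b → (P a ↔ P b) := by
        intro a b hab
        obtain ⟨hT, hne⟩ := of_sdiff_adj hab
        rcases (sierAdj_succ_iff G t a b).mp hT with ⟨h1, h2, h3⟩ | ⟨h0, hHt⟩
        · -- cross
          by_cases hac : a 0 = u 0
          · have hbc : b 0 ≠ u 0 := fun hh => h1.ne (hac.trans hh.symm)
            rw [Pc a hac, Pn b hbc]
            have ht' : a ∘ Fin.succ = fun _ => b 0 := funext fun k => h2 k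
            rw [ht']
            exact keyστ (b 0) (by rw [← hac]; exact h1)
          · by_cases hbc : b 0 = u 0
            · rw [Pn a hac, Pc b hbc]
              have ht' : b ∘ Fin.succ = fun _ => a 0 := funext fun k => h3 k
              rw [ht']
              exact (keyστ (a 0) (by rw [← hbc]; exact h1.symm)).symm
            · rw [Pn a hac, Pn b hbc]
              exact τinv _ _ h1 hac hbc
        · -- same copy
          by_cases hac : a 0 = u 0
          · have hbc : b 0 = u 0 := h0.symm.trans hac
            rw [Pc a hac, Pc b hbc]
            refine hσinv _ _ hHt ?_
            intro hcc
            rcases Sym2.eq_iff.mp hcc with ⟨e1, e2⟩ | ⟨e1, e2⟩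
            · refine hne ?_
              have ha' : a = u := headTailExt hac fun k => congrFun e1 k
              have hb' : b = v := headTailExt (hbc.trans hc0) fun k => congrFun e2 k
              rw [ha', hb']
            · refine hne ?_
              have ha' : a = v := headTailExt (hac.trans hc0) fun k => congrFun e1 k
              have hb' : b = u := headTailExt hbc fun k => congrFun e2 k
              rw [ha', hb']
              exact Sym2.eq_swap
          · have hbc : b 0 ≠ u 0 := fun hh => hac (h0.trans hh)
            rw [Pn a hac, Pn b hbc, h0]
      have hiff := reach_inv P inv hreach
      have hPu : P u := ⟨fun _ => SimpleGraph.Reachable.refl _, fun hn => absurd rfl hn⟩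
      exact ih (u ∘ Fin.succ) (v ∘ Fin.succ) hH ((hiff.mp hPu).1 hc0.symm)

private lemma gasket_acyclic_aux {G : SimpleGraph V} {t : ℕ}
    (hB : ∀ u v : Fin t → V, sierAdj G t u v →
      ¬ ((sier G t) \ SimpleGraph.fromEdgeSet {s(u, v)}).Reachable u v) :
    (gasket G t).IsAcyclic := by
  intro x c hc
  cases c with
  | nil => exact hc.ne_nil rfl
  | @cons _ y _ h p =>
    obtain ⟨hxy, u, v, hu, hv, hadj⟩ := id h
    have hnodup := hc.edges_nodup
    rw [SimpleGraph.Walk.edges_cons, List.nodup_cons] at hnodup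
    have hmem : s(x, y) ∉ p.edges := hnodup.1
    let F : (Fin t → V) → Prop := fun w =>
      ((sier G t) \ SimpleGraph.fromEdgeSet {s(u, v)}).Reachable u w
    have hFinv : ∀ a b : Fin t → V, linking G t a b → (F a ↔ F b) := by
      intro a b hab
      obtain ⟨pp, i, hip, hlt2, h1, h2, h3⟩ := hab
      have hT : sierAdj G t a b := ⟨i, h1, h2, h3⟩
      have hne : s(a, b) ≠ s(u, v) := by
        intro hcc
        rcases Sym2.eq_iff.mp hcc with ⟨e1, e2⟩ | ⟨e1, e2⟩
        · subst e1; subst e2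
          refine hxy ?_
          rw [← hu, ← hv]
          exact Quotient.sound (Relation.EqvGen.rel _ _ ⟨pp, i, hip, hlt2, h1, h2, h3⟩)
        · subst e1; subst e2
          refine hxy ?_
          rw [← hu, ← hv]
          exact (Quotient.sound (Relation.EqvGen.rel _ _ ⟨pp, i, hip, hlt2, h1, h2, h3⟩)).symm
      have hadj' := sdiff_adj_of (sier G t) hT hne
      exact ⟨fun hh => hh.trans hadj'.reachable, fun hh => hh.trans hadj'.symm.reachable⟩
    have hresp : ∀ a b : Fin t → V, Relation.EqvGen (linking G t) a b → F a = F b := by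
      intro a b hab
      induction hab with
      | rel a b hr => exact propext (hFinv a b hr)
      | refl a => rfl
      | symm a b _ ih => exact ih.symm
      | trans a b c _ _ ih1 ih2 => exact ih1.trans ih2
    let FQ : Quotient (gasketSetoid G t) → Prop :=
      Quotient.lift F fun a b hab => hresp a b hab
    have hFQ : ∀ w : Fin t → V, FQ (Quotient.mk (gasketSetoid G t) w) = F w := fun _ => rfl
    have hwalk : ∀ {z z' : Quotient (gasketSetoid G t)} (q : (gasket G t).Walk z z'),
        s(x, y) ∉ q.edges → (FQ z ↔ FQ z') := by
      intro z z' q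
      induction q with
      | nil => exact fun _ => Iff.rfl
      | @cons a b _ h' q' ih =>
        intro hmem'
        rw [SimpleGraph.Walk.edges_cons, List.mem_cons] at hmem'
        push_neg at hmem'
        obtain ⟨hne1, hmem2⟩ := hmem'
        refine Iff.trans ?_ (ih hmem2)
        obtain ⟨hzz, u', v', hu', hv', hadj'⟩ := h'
        have hne2 : s(u', v') ≠ s(u, v) := by
          intro hcc
          rcases Sym2.eq_iff.mp hcc with ⟨e1, e2⟩ | ⟨e1, e2⟩
          · apply hne1
            rw [← hu', ← hv', e1, e2, hu, hv]
          · apply hne1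
            rw [← hu', ← hv', e1, e2, hu, hv]
            exact Sym2.eq_swap
        have hadjT := sdiff_adj_of (sier G t) hadj' hne2
        rw [← hu', ← hv', hFQ u', hFQ v']
        exact ⟨fun hh => hh.trans hadjT.reachable, fun hh => hh.trans hadjT.symm.reachable⟩
    have hxF : FQ x := by
      rw [← hu]
      show F u
      exact SimpleGraph.Reachable.refl u
    have hyF : FQ y := (hwalk p hmem).mpr hxF
    have hFv : F v := by rw [← hv, hFQ v] at hyF; exact hyF
    exact hB u v hadj hFv

/-- if `G` is acyclic then `S[G,t]` is acyclic for every `t ≥ 1`. -/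
theorem stmt_4 (G : SimpleGraph V) (hG : G.IsAcyclic) (t : ℕ) (ht : 1 ≤ t) :
    (gasket G t).IsAcyclic := by
  exact gasket_acyclic_aux (fun u v h => sier_bridge G hG t u v h)
end

section
/- In S[G,t] with t ≥ 3, if two contracted vertices are adjacent, then at least one of them is a vertex obtained by contracting a linking edge at step 2 (i.e., is of the form u_1...u_{t−2}{i,j}_2 with ij ∈ E(G)). -/
variable {V : Type*}

/-- `x` is a contracted vertex of `S[G,t]` (its class contains an endpoint of a linking edge). -/
def contractedVtx (G : SimpleGraph V) (t : ℕ) (x : Quotient (gasketSetoid G t)) : Prop :=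
  ∃ u v, linking G t u v ∧ Quotient.mk (gasketSetoid G t) u = x

/-- `x` is a vertex of `S[G,t]` contracted at step `s` (the contraction of a linking
edge at position `t - s`, i.e. of the form `u_1...u_{t-s}{i,j}_s`). -/
def contractedVtxAtStep (G : SimpleGraph V) (t s : ℕ)
    (x : Quotient (gasketSetoid G t)) : Prop :=
  ∃ u v, linkingAt G t (t - s) u v ∧ Quotient.mk (gasketSetoid G t) u = x

theorem linking_symm' {G : SimpleGraph V} {t : ℕ} {u v : Fin t → V}
    (h : linking G t u v) : linking G t v u := by
  obtain ⟨p, i, h0, h1, h2, h3, h4⟩ := h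
  exact ⟨p, i, h0, h1, fun j hj => (h2 j hj).symm, h3.symm,
    fun j hj => ⟨(h4 j hj).2, (h4 j hj).1⟩⟩

theorem linking_unique {G : SimpleGraph V} {t : ℕ} {u v w : Fin t → V}
    (h1 : linking G t u v) (h2 : linking G t u w) : v = w := by
  obtain ⟨p1, i1, -, hlt1, ha1, hadj1, hb1⟩ := h1
  obtain ⟨p2, i2, -, hlt2, ha2, hadj2, hb2⟩ := h2
  have key : ∀ (i j : Fin t) (ai bj : V), j.val + 1 < t → u j ≠ bj →
      (∀ k, i < k → u k = ai) → (∀ k, j < k → u k = bj) → i < j → False := by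
    intro i j ai bj hj hne hia hjb hij
    have hj1 : j < (⟨j.val + 1, hj⟩ : Fin t) := by simp [Fin.lt_def]
    have e1 : u j = ai := hia j hij
    have e2 : u ⟨j.val + 1, hj⟩ = ai := hia _ (lt_trans hij hj1)
    have e3 : u ⟨j.val + 1, hj⟩ = bj := hjb _ hj1
    exact hne (by rw [e1, ← e2, e3])
  have hii : i1 = i2 := by
    rcases lt_trichotomy i1 i2 with h | h | h
    · exact absurd h (fun h => key i1 i2 (v i1) (w i2) hlt2 (G.ne_of_adj hadj2)
        (fun k hk => (hb1 k hk).1) (fun k hk => (hb2 k hk).1) h)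
    · exact h
    · exact absurd h (fun h => key i2 i1 (w i2) (v i1) hlt1 (G.ne_of_adj hadj1)
        (fun k hk => (hb2 k hk).1) (fun k hk => (hb1 k hk).1) h)
  subst hii
  have hi1 : i1 < (⟨i1.val + 1, hlt1⟩ : Fin t) := by simp [Fin.lt_def]
  have hvi : v i1 = w i1 := by
    rw [← (hb1 _ hi1).1, (hb2 _ hi1).1]
  funext j
  rcases lt_trichotomy j i1 with h | h | h
  · rw [← ha1 j h, ha2 j h]
  · rw [h, hvi]
  · rw [(hb1 j h).2, (hb2 j h).2]

theorem eqvGen_linking {G : SimpleGraph V} {t : ℕ} {u v : Fin t → V}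
    (h : Relation.EqvGen (linking G t) u v) : u = v ∨ linking G t u v := by
  induction h with
  | rel a b h => exact Or.inr h
  | refl a => exact Or.inl rfl
  | symm a b h ih =>
    rcases ih with rfl | h'
    · exact Or.inl rfl
    · exact Or.inr (linking_symm' h')
  | trans a b c h1 h2 ih1 ih2 =>
    rcases ih1 with rfl | h1'
    · exact ih2
    · rcases ih2 with rfl | h2'
      · exact Or.inr h1'
      · exact Or.inl (linking_unique (linking_symm' h1') h2')

theorem endpoint_of_contracted {G : SimpleGraph V} {t : ℕ}
    {x : Quotient (gasketSetoid G t)} (hx : contractedVtx G t x)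
    (u : Fin t → V) (hu : Quotient.mk (gasketSetoid G t) u = x) :
    ∃ w, linking G t u w := by
  obtain ⟨a, b, hab, ha⟩ := hx
  have : Relation.EqvGen (linking G t) a u := Quotient.exact (ha.trans hu.symm)
  rcases eqvGen_linking this with rfl | h
  · exact ⟨b, hab⟩
  · exact ⟨a, linking_symm' h⟩

/-- in `S[G,t]` with `t ≥ 3`, if two contracted vertices are adjacent then
at least one of them is contracted at step `2`. -/
theorem stmt_6 (G : SimpleGraph V) (t : ℕ) (ht : 3 ≤ t)
    (x y : Quotient (gasketSetoid G t))
    (hx : contractedVtx G t x) (hy : contractedVtx G t y)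
    (hadj : (gasket G t).Adj x y) :
    contractedVtxAtStep G t 2 x ∨ contractedVtxAtStep G t 2 y := by
  obtain ⟨hne, u, v, hu, hv, i, h1, h2, h3⟩ := hadj
  by_cases hlast : i.val + 1 < t
  · refine absurd ?_ hne
    rw [← hu, ← hv]
    exact Quotient.sound (Relation.EqvGen.rel _ _
      ⟨i.val, i, rfl, hlast, h1, h2, h3⟩)
  have hival : i.val = t - 1 := by have := i.isLt; omega
  obtain ⟨wu, hwu⟩ := endpoint_of_contracted hx u hu
  obtain ⟨wv, hwv⟩ := endpoint_of_contracted hy v hv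
  obtain ⟨pu, iu, hpu, hiu, hua, huadj, hub⟩ := hwu
  obtain ⟨pv, iv, hpv, hiv, hva, hvadj, hvb⟩ := hwv
  by_cases hcu : iu.val = t - 2
  · exact Or.inl ⟨u, wu, ⟨iu, hcu, hiu, hua, huadj, hub⟩, hu⟩
  by_cases hcv : iv.val = t - 2
  · exact Or.inr ⟨v, wv, ⟨iv, hcv, hiv, hva, hvadj, hvb⟩, hv⟩
  exfalso
  have hjlt : t - 2 < t := by omega
  set j : Fin t := ⟨t - 2, hjlt⟩ with hj
  have hji : j < i := by simp [Fin.lt_def, hj, hival]; omega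
  have hui : iu < j := by simp [Fin.lt_def, hj]; omega
  have hvj : iv < j := by simp [Fin.lt_def, hj]; omega
  have e1 : u j = wu iu := (hub j hui).1
  have e2 : u i = wu iu := (hub i (lt_trans hui hji)).1
  have e3 : v j = wv iv := (hvb j hvj).1
  have e4 : v i = wv iv := (hvb i (lt_trans hvj hji)).1
  have e5 : u j = v j := h1 j hji
  have : u i = v i := by rw [e2, ← e1, e5, e3, ← e4]
  exact G.irrefl (this ▸ h2)
end

section
/- In S[G,2], an uncontracted vertex ij (with ij ∉ E(G)) has neighborhood { il : jl ∈ E(G), il ∉ E(G) } ∪ { {i,l}_2 : jl ∈ E(G), il ∈ E(G) }. -/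
variable {V : Type*}

lemma linking2 {G : SimpleGraph V} {u v : Fin 2 → V} (h : linking G 2 u v) :
    G.Adj (u 0) (v 0) ∧ u 1 = v 0 ∧ v 1 = u 0 := by
  obtain ⟨p, k, hk, hk2, hlt, hadj, hgt⟩ := h
  have hk0 : k = 0 := by omega
  subst hk0
  have h1 := hgt 1 (by decide)
  exact ⟨hadj, h1.1, h1.2⟩

lemma eqv2 {G : SimpleGraph V} {u v : Fin 2 → V}
    (h : Relation.EqvGen (linking G 2) u v) :
    u = v ∨ (G.Adj (u 0) (u 1) ∧ v 0 = u 1 ∧ v 1 = u 0) := by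
  induction h with
  | rel a b hab =>
    obtain ⟨hadj, h1, h2⟩ := linking2 hab
    exact Or.inr ⟨h1 ▸ hadj, h1.symm, h2⟩
  | refl a => exact Or.inl rfl
  | symm a b _ ih =>
    rcases ih with rfl | ⟨hadj, h1, h2⟩
    · exact Or.inl rfl
    · exact Or.inr ⟨by rw [h1, h2]; exact hadj.symm, h2.symm, h1.symm⟩
  | trans a b c _ _ ih1 ih2 =>
    rcases ih1 with rfl | ⟨hadj1, h1, h2⟩
    · exact ih2
    · rcases ih2 with rfl | ⟨hadj2, h3, h4⟩
      · exact Or.inr ⟨hadj1, h1, h2⟩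
      · left
        funext x
        fin_cases x
        · exact (h3.trans h2).symm
        · exact (h4.trans h1).symm

/-- in `S[G,2]`, the neighborhood of an uncontracted vertex `ij`
(`ij ∉ E(G)`) is `{ il : jl ∈ E(G), il ∉ E(G) } ∪ { {i,l}_2 : jl ∈ E(G), il ∈ E(G) }`
(the contracted vertex `{i,l}_2` being the class of the word `il`). -/
theorem stmt_18 (G : SimpleGraph V) (i j : V) (hij : ¬ G.Adj i j) :
    (gasket G 2).neighborSet (Quotient.mk (gasketSetoid G 2) ![i, j]) =
      {x | ∃ l, G.Adj j l ∧ ¬ G.Adj i l ∧ x = Quotient.mk (gasketSetoid G 2) ![i, l]} ∪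
      {x | ∃ l, G.Adj j l ∧ G.Adj i l ∧ x = Quotient.mk (gasketSetoid G 2) ![i, l]} := by
  ext x
  simp only [SimpleGraph.mem_neighborSet, Set.mem_union, Set.mem_setOf_eq]
  constructor
  · rintro ⟨hne, u, v, hu, hv, k, hlt, hadj, hgt⟩
    have hu' : u = ![i, j] := by
      rcases eqv2 (Quotient.exact hu) with h | ⟨hadj', h1, h2⟩
      · exact h
      · simp only [Matrix.cons_val_zero, Matrix.cons_val_one, Matrix.head_cons] at h1 h2
        exact absurd (h1 ▸ h2 ▸ hadj') (fun h => hij h.symm)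
    subst hu'
    fin_cases k
    · have h1 := hgt 1 (by decide)
      simp only [Matrix.cons_val_zero, Matrix.cons_val_one, Matrix.head_cons] at h1 hadj
      exact absurd (h1.1 ▸ hadj) hij
    · have h0 := hlt 0 (by decide)
      simp only [Matrix.cons_val_zero, Matrix.cons_val_one, Matrix.head_cons] at h0 hadj
      have hv' : v = ![i, v 1] := by
        funext y; fin_cases y
        · exact h0.symm
        · rfl
      have hx : x = Quotient.mk (gasketSetoid G 2) ![i, v 1] := by
        rw [← hv]; exact congrArg _ hv'
      by_cases hil : G.Adj i (v 1)
      · exact Or.inr ⟨v 1, hadj, hil, hx⟩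
      · exact Or.inl ⟨v 1, hadj, hil, hx⟩
  · intro hx
    obtain ⟨l, hjl, -, rfl⟩ : ∃ l, G.Adj j l ∧ True ∧
        x = Quotient.mk (gasketSetoid G 2) ![i, l] := by
      rcases hx with ⟨l, h1, h2, h3⟩ | ⟨l, h1, h2, h3⟩ <;> exact ⟨l, h1, trivial, h3⟩
    refine ⟨?_, ![i, j], ![i, l], rfl, rfl, 1, ?_, ?_, ?_⟩
    · intro h
      rcases eqv2 (Quotient.exact h) with h' | ⟨hadj', h1, h2⟩
      · have := congrFun h' 1
        simp only [Matrix.cons_val_one, Matrix.head_cons, Matrix.cons_val_zero] at this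
        exact hjl.ne' (this ▸ rfl)
      · simp only [Matrix.cons_val_zero, Matrix.cons_val_one, Matrix.head_cons] at hadj'
        exact hij hadj'
    · intro y hy
      fin_cases y
      · rfl
      · exact absurd hy (by decide)
    · simpa using hjl
    · intro y hy
      fin_cases y <;> exact absurd hy (by decide)
end
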